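/- Let a < b < c be positive integers with a + b ≤ c, and let y = (c, b, a). Then the set of nondecreasing invariant parking assortments for y is PA^{inv,↑}_3(y) = {(1,1,1), (1,1,1+a), (1,1,1+b), (1,1,1+a+b)}. -/

import Mathlib

open Classical in
/-- One car attempts to park on a one-way street with spots `1, …, m`: given the set
`occ` of occupied spots, the car with preference `p` and length `l` parks in spots
`j, j+1, …, j+l-1` for the least `j ≥ p` such that these spots all exist (are `≤ m`)
and are unoccupied; returns the new set of occupied spots, or `none` if parking fails. -/
noncomputable def parkOne (m : ℕ) (occ : Finset ℕ) (p l : ℕ) : Option (Finset ℕ) :=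
  if h : ∃ j, p ≤ j ∧ j + l ≤ m + 1 ∧ ∀ k ∈ Finset.Ico j (j + l), k ∉ occ then
    some (occ ∪ Finset.Ico (Nat.find h) (Nat.find h + l))
  else none

/-- Run the parking-assortment process for the cars `(preference, length)` in order. -/
noncomputable def parkList (m : ℕ) : List (ℕ × ℕ) → Finset ℕ → Option (Finset ℕ)
  | [], occ => some occ
  | c :: rest, occ => (parkOne m occ c.1 c.2).bind (parkList m rest)

/-- `x` is a parking assortment for the list of car lengths `y`. -/
def IsPA (y x : List ℕ) : Prop :=
  x.length = y.length ∧ (∀ a ∈ x, 1 ≤ a ∧ a ≤ y.sum) ∧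
    (parkList y.sum (x.zip y) ∅).isSome

/-- `PA y` is the set of parking assortments for `y`. -/
def PA (y : List ℕ) : Set (List ℕ) := {x | IsPA y x}

/-- `PAinv y` is the set of (permutation-)invariant parking assortments for `y`:
those preference lists all of whose rearrangements are parking assortments for `y`. -/
def PAinv (y : List ℕ) : Set (List ℕ) := {x | ∀ x', x'.Perm x → IsPA y x'}

/-- `y` is minimally invariant if the all-ones list is the only invariant
parking assortment for `y`. -/
def MinInv (y : List ℕ) : Prop := PAinv y = {List.replicate y.length 1}

lemma parkList_nil (m : ℕ) (occ : Finset ℕ) : parkList m [] occ = some occ := rfl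

lemma parkList_cons (m p l : ℕ) (rest : List (ℕ × ℕ)) (occ : Finset ℕ) :
    parkList m ((p, l) :: rest) occ = (parkOne m occ p l).bind (parkList m rest) := rfl

lemma parkOne_eq_some {m p l j : ℕ} {occ : Finset ℕ}
    (h1 : p ≤ j) (h2 : j + l ≤ m + 1)
    (h3 : ∀ k ∈ Finset.Ico j (j + l), k ∉ occ)
    (hmin : ∀ j' < j, ¬(p ≤ j' ∧ j' + l ≤ m + 1 ∧ ∀ k ∈ Finset.Ico j' (j' + l), k ∉ occ)) :
    parkOne m occ p l = some (occ ∪ Finset.Ico j (j + l)) := by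
  rw [parkOne]
  split
  · rename_i hex
    have hfind : Nat.find hex = j := by
      rw [Nat.find_eq_iff]
      exact ⟨⟨h1, h2, h3⟩, fun n hn hc => hmin n hn hc⟩
    rw [hfind]
  · rename_i hex
    exact absurd ⟨j, h1, h2, h3⟩ hex

lemma parkOne_eq_none {m p l : ℕ} {occ : Finset ℕ}
    (h : ∀ j, p ≤ j → j + l ≤ m + 1 → ∃ k ∈ Finset.Ico j (j + l), k ∈ occ) :
    parkOne m occ p l = none := by
  rw [parkOne]
  split
  · rename_i hex
    obtain ⟨j, hj1, hj2, hj3⟩ := hex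
    obtain ⟨k, hk1, hk2⟩ := h j hj1 hj2
    exact (hj3 k hk1 hk2).elim
  · rfl

lemma parkOne_isSome_iff {m p l : ℕ} {occ : Finset ℕ} :
    (parkOne m occ p l).isSome ↔
      ∃ j, p ≤ j ∧ j + l ≤ m + 1 ∧ ∀ k ∈ Finset.Ico j (j + l), k ∉ occ := by
  rw [parkOne]
  split
  · rename_i hex
    exact iff_of_true (by simp) hex
  · rename_i hex
    exact iff_of_false (by simp) hex

lemma bind_nil_isSome (m : ℕ) (o : Option (Finset ℕ)) :
    (o.bind (parkList m [])).isSome = o.isSome := by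
  cases o <;> simp [parkList]

lemma gap_iff {m aa p s1 e1 s2 e2 : ℕ} {occ : Finset ℕ}
    (ha : 0 < aa)
    (hocc : ∀ k, k ∈ occ ↔ (s1 ≤ k ∧ k < e1) ∨ (s2 ≤ k ∧ k < e2))
    (h12 : e1 ≤ s2) (hi1 : s1 < e1) (hi2 : s2 < e2) (he2 : e2 ≤ m + 1) :
    (∃ j, p ≤ j ∧ j + aa ≤ m + 1 ∧ ∀ k ∈ Finset.Ico j (j + aa), k ∉ occ) ↔
      (p + aa ≤ s1 ∨ max p e1 + aa ≤ s2 ∨ max p e2 + aa ≤ m + 1) := by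
  constructor
  · rintro ⟨j, hj1, hj2, hj3⟩
    have hj3' : ∀ k, j ≤ k → k < j + aa → ¬((s1 ≤ k ∧ k < e1) ∨ (s2 ≤ k ∧ k < e2)) :=
      fun k hk1 hk2 hcon => hj3 k (Finset.mem_Ico.mpr ⟨hk1, hk2⟩) ((hocc k).mpr hcon)
    have K1 : j + aa ≤ s1 ∨ e1 ≤ j := by
      by_contra hcon
      push_neg at hcon
      exact hj3' (max j s1) (le_max_left _ _) (by omega) (Or.inl (by omega))
    have K2 : j + aa ≤ s2 ∨ e2 ≤ j := by
      by_contra hcon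
      push_neg at hcon
      exact hj3' (max j s2) (le_max_left _ _) (by omega) (Or.inr (by omega))
    omega
  · rintro (h | h | h)
    · exact ⟨p, le_rfl, by omega, fun k hk hmem => by
        rw [Finset.mem_Ico] at hk
        have := (hocc k).mp hmem
        omega⟩
    · exact ⟨max p e1, le_max_left _ _, by omega, fun k hk hmem => by
        rw [Finset.mem_Ico] at hk
        have := (hocc k).mp hmem
        omega⟩
    · exact ⟨max p e2, le_max_left _ _, by omega, fun k hk hmem => by
        rw [Finset.mem_Ico] at hk
        have := (hocc k).mp hmem
        omega⟩

def Cond (a b c p1 p2 p3 : ℕ) : Prop :=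
  p1 + c ≤ a + b + c + 1 ∧
    ((p2 + b ≤ p1 ∧ (p3 + a ≤ p2 ∨ max p3 (p2 + b) + a ≤ p1 ∨
        max p3 (p1 + c) + a ≤ a + b + c + 1))
     ∨ (p1 < p2 + b ∧ max p2 (p1 + c) + b ≤ a + b + c + 1 ∧
        (p3 + a ≤ p1 ∨ max p3 (p1 + c) + a ≤ max p2 (p1 + c) ∨
         max p3 (max p2 (p1 + c) + b) + a ≤ a + b + c + 1)))

lemma succ_iff (m a b c p1 p2 p3 : ℕ) (ha : 0 < a) (hb : 0 < b) (hc : 0 < c)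
    (hm : m = a + b + c) :
    (parkList m [(p1, c), (p2, b), (p3, a)] ∅).isSome ↔ Cond a b c p1 p2 p3 := by
  subst hm
  by_cases h1 : p1 + c ≤ a + b + c + 1
  · have s1 : parkOne (a + b + c) ∅ p1 c = some (∅ ∪ Finset.Ico p1 (p1 + c)) :=
      parkOne_eq_some le_rfl h1 (by simp) (fun j' hj' hcc => absurd hcc.1 (by omega))
    rw [parkList_cons, s1, Finset.empty_union, Option.bind_some]
    by_cases h2 : p2 + b ≤ p1
    · have s2 : parkOne (a + b + c) (Finset.Ico p1 (p1 + c)) p2 b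
          = some (Finset.Ico p1 (p1 + c) ∪ Finset.Ico p2 (p2 + b)) :=
        parkOne_eq_some le_rfl (by omega)
          (by
            intro k hk
            simp only [Finset.mem_Ico] at *
            omega)
          (fun j' hj' hcc => absurd hcc.1 (by omega))
      rw [parkList_cons, s2, Option.bind_some, parkList_cons, bind_nil_isSome,
        parkOne_isSome_iff,
        gap_iff (s1 := p2) (e1 := p2 + b) (s2 := p1) (e2 := p1 + c) ha
          (fun k => by simp only [Finset.mem_union, Finset.mem_Ico]; try omega)
          h2 (by omega) (by omega) (by omega)]
      simp only [Cond]
      omega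
    · by_cases h2' : max p2 (p1 + c) + b ≤ a + b + c + 1
      · have s2 : parkOne (a + b + c) (Finset.Ico p1 (p1 + c)) p2 b
            = some (Finset.Ico p1 (p1 + c) ∪
                Finset.Ico (max p2 (p1 + c)) (max p2 (p1 + c) + b)) :=
          parkOne_eq_some (le_max_left _ _) h2'
            (by
              intro k hk
              simp only [Finset.mem_Ico] at *
              omega)
            (by
              intro j' hj' hcc
              obtain ⟨hA, hB, hC⟩ := hcc
              exact hC (max j' p1)
                (by simp only [Finset.mem_Ico]; omega)
                (by simp only [Finset.mem_Ico]; omega))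
        rw [parkList_cons, s2, Option.bind_some, parkList_cons, bind_nil_isSome,
          parkOne_isSome_iff,
          gap_iff (s1 := p1) (e1 := p1 + c) (s2 := max p2 (p1 + c))
            (e2 := max p2 (p1 + c) + b) ha
            (fun k => by simp only [Finset.mem_union, Finset.mem_Ico]; try omega)
            (le_max_right _ _) (by omega) (by omega) (by omega)]
        simp only [Cond]
        omega
      · have s2 : parkOne (a + b + c) (Finset.Ico p1 (p1 + c)) p2 b = none :=
          parkOne_eq_none (by
            intro j hjp hjm
            refine ⟨max j p1, ?_, ?_⟩ <;> simp only [Finset.mem_Ico] <;> omega)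
        rw [parkList_cons, s2]
        exact iff_of_false (by simp) (by simp only [Cond]; omega)
  · have s1 : parkOne (a + b + c) ∅ p1 c = none :=
      parkOne_eq_none (fun j hj1 hj2 => absurd hj2 (by omega))
    rw [parkList_cons, s1]
    exact iff_of_false (by simp) (by simp only [Cond]; omega)

lemma perm2 {α : Type*} {x y u v : α} (h : [x, y].Perm [u, v]) :
    (x = u ∧ y = v) ∨ (x = v ∧ y = u) := by
  have hx : x ∈ [u, v] := h.subset (by simp)
  simp only [List.mem_cons, List.mem_singleton, List.not_mem_nil, or_false] at hx
  rcases hx with rfl | rfl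
  · exact Or.inl ⟨rfl, List.singleton_perm_singleton.mp ((List.perm_cons x).mp h)⟩
  · have h' : [x, y].Perm [x, u] := h.trans (List.Perm.swap u x []).symm
    exact Or.inr ⟨rfl, List.singleton_perm_singleton.mp ((List.perm_cons x).mp h')⟩

lemma perm3 {α : Type*} {l : List α} {p q r : α} (h : l.Perm [p, q, r]) :
    l = [p, q, r] ∨ l = [p, r, q] ∨ l = [q, p, r] ∨ l = [q, r, p] ∨
      l = [r, p, q] ∨ l = [r, q, p] := by
  have hlen : l.length = 3 := by simpa using h.length_eq
  obtain ⟨x, y, z, rfl⟩ : ∃ x y z, l = [x, y, z] := by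
    rcases l with _ | ⟨x, _ | ⟨y, _ | ⟨z, _ | ⟨w, s⟩⟩⟩⟩
    · simp at hlen
    · simp at hlen
    · simp at hlen
    · exact ⟨x, y, z, rfl⟩
    · simp at hlen
  have hx : x ∈ [p, q, r] := h.subset (by simp)
  simp only [List.mem_cons, List.mem_singleton, List.not_mem_nil, or_false] at hx
  rcases hx with rfl | rfl | rfl
  · have h2 := (List.perm_cons x).mp h
    rcases perm2 h2 with ⟨rfl, rfl⟩ | ⟨rfl, rfl⟩ <;> tauto
  · have h' : List.Perm [x, y, z] (x :: p :: [r]) := h.trans (List.Perm.swap x p [r])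
    have h2 := (List.perm_cons x).mp h'
    rcases perm2 h2 with ⟨rfl, rfl⟩ | ⟨rfl, rfl⟩ <;> tauto
  · have h' : List.Perm [x, y, z] (x :: p :: [q]) :=
      h.trans ((List.Perm.cons p (List.Perm.swap x q [])).trans (List.Perm.swap x p [q]))
    have h2 := (List.perm_cons x).mp h'
    rcases perm2 h2 with ⟨rfl, rfl⟩ | ⟨rfl, rfl⟩ <;> tauto

lemma isPA_iff (a b c q1 q2 q3 : ℕ) (ha : 0 < a) (hb : 0 < b) (hc : 0 < c) :
    IsPA [c, b, a] [q1, q2, q3] ↔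
      ((1 ≤ q1 ∧ q1 ≤ a + b + c) ∧ (1 ≤ q2 ∧ q2 ≤ a + b + c) ∧
        (1 ≤ q3 ∧ q3 ≤ a + b + c)) ∧ Cond a b c q1 q2 q3 := by
  have hm : ([c, b, a] : List ℕ).sum = a + b + c := by
    simp only [List.sum_cons, List.sum_nil]
    omega
  rw [IsPA, hm]
  rw [show ([q1, q2, q3].zip [c, b, a]) = [(q1, c), (q2, b), (q3, a)] from rfl]
  rw [succ_iff (a + b + c) a b c q1 q2 q3 ha hb hc rfl]
  constructor
  · rintro ⟨-, hbd, hcd⟩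
    exact ⟨⟨hbd q1 (by simp), hbd q2 (by simp), hbd q3 (by simp)⟩, hcd⟩
  · rintro ⟨⟨b1, b2, b3⟩, hcd⟩
    refine ⟨rfl, ?_, hcd⟩
    intro x hx
    simp only [List.mem_cons, List.mem_singleton, List.not_mem_nil, or_false] at hx
    rcases hx with rfl | rfl | rfl
    exacts [b1, b2, b3]

theorem stmt19 (a b c : ℕ) (ha : 0 < a) (hab : a < b) (hbc : b < c)
    (habc : a + b ≤ c) :
    {x | x ∈ PAinv [c, b, a] ∧ x.Pairwise (· ≤ ·)} =
      ({[1, 1, 1], [1, 1, 1 + a], [1, 1, 1 + b], [1, 1, 1 + a + b]} : Set (List ℕ)) := by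
  have hb : 0 < b := by omega
  have hc : 0 < c := by omega
  ext x
  simp only [Set.mem_setOf_eq, Set.mem_insert_iff, Set.mem_singleton_iff]
  constructor
  · rintro ⟨hinv, hsort⟩
    have hinv' : ∀ x', x'.Perm x → IsPA [c, b, a] x' := hinv
    have h0 := hinv' x (List.Perm.refl x)
    have hlen : x.length = 3 := by simpa using h0.1
    obtain ⟨u, v, t, rfl⟩ : ∃ u v t, x = [u, v, t] := by
      rcases x with _ | ⟨u, _ | ⟨v, _ | ⟨t, _ | ⟨w, s⟩⟩⟩⟩
      · simp at hlen
      · simp at hlen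
      · simp at hlen
      · exact ⟨u, v, t, rfl⟩
      · simp at hlen
    have hs : u ≤ v ∧ v ≤ t := by
      simp only [List.pairwise_cons, List.mem_cons, List.mem_singleton,
        List.not_mem_nil, or_false] at hsort
      exact ⟨hsort.1 v (Or.inl rfl), hsort.2.1 t rfl⟩
    have hP1 := (isPA_iff a b c u v t ha hb hc).mp (hinv' [u, v, t] (List.Perm.refl _))
    have hP2 := (isPA_iff a b c v u t ha hb hc).mp
      (hinv' [v, u, t] (List.Perm.swap u v [t]))
    have hP3 := (isPA_iff a b c t v u ha hb hc).mp
      (hinv' [t, v, u]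
        (((List.Perm.swap v t [u]).trans (List.Perm.cons v (List.Perm.swap u t []))).trans
          (List.Perm.swap u v [t])))
    obtain ⟨hB1, hC1⟩ := hP1
    obtain ⟨-, hC2⟩ := hP2
    obtain ⟨-, hC3⟩ := hP3
    have key : u = 1 ∧ v = 1 ∧ (t = 1 ∨ t = 1 + a ∨ t = 1 + b ∨ t = 1 + a + b) := by
      simp only [Cond] at hC1 hC2 hC3
      omega
    obtain ⟨rfl, rfl, ht⟩ := key
    rcases ht with rfl | rfl | rfl | rfl <;> tauto
  · intro hx
    have main : ∀ u v t : ℕ, u = 1 → v = 1 →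
        (t = 1 ∨ t = 1 + a ∨ t = 1 + b ∨ t = 1 + a + b) →
        [u, v, t] ∈ PAinv [c, b, a] ∧ List.Pairwise (· ≤ ·) [u, v, t] := by
      rintro u v t rfl rfl ht
      constructor
      · intro x' hx'
        rcases perm3 hx' with rfl | rfl | rfl | rfl | rfl | rfl <;>
          refine (isPA_iff a b c _ _ _ ha hb hc).mpr
            ⟨by omega, by simp only [Cond]; omega⟩
      · simp only [List.pairwise_cons, List.mem_cons, List.mem_singleton,
          List.not_mem_nil, or_false]
        refine ⟨fun s hs' => by rcases hs' with rfl | rfl <;> omega,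
          fun s hs' => by subst hs'; omega, fun s hs' => hs'.elim, List.Pairwise.nil⟩
    rcases hx with rfl | rfl | rfl | rfl
    · exact main 1 1 1 rfl rfl (by tauto)
    · exact main 1 1 (1 + a) rfl rfl (by tauto)
    · exact main 1 1 (1 + b) rfl rfl (by tauto)
    · exact main 1 1 (1 + a + b) rfl rfl (by tauto)
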